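/- Conversely, if p_g(0) + p_b(0) = p_l(0) and |p_l(k) − p_l(k−1)| ≤ r_g + r_b for all k = 1,...,h, and the box constraints are inactive (taken as all of ℝ), then there exist sequences p_g, p_b satisfying both ramp constraints |p_g(k)−p_g(k−1)| ≤ r_g, |p_b(k)−p_b(k−1)| ≤ r_b and exact tracking p_g(k) + p_b(k) = p_l(k) for all k ≤ h. -/

import Mathlib

theorem tracking_exists_when_load_ramp_within_limits
    (h : ℕ) (rg rb pg0 pb0 : ℝ) (pl : ℕ → ℝ)
    (hrg : rg ≥ 0) (hrb : rb ≥ 0)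
    (hinit : pg0 + pb0 = pl 0)
    (hload : ∀ k < h, |pl (k + 1) - pl k| ≤ rg + rb) :
    ∃ pg pb : ℕ → ℝ,
      pg 0 = pg0 ∧ pb 0 = pb0 ∧
      (∀ k < h, |pg (k + 1) - pg k| ≤ rg) ∧
      (∀ k < h, |pb (k + 1) - pb k| ≤ rb) ∧
      (∀ k ≤ h, pg k + pb k = pl k) := by
  set c : ℝ := if rg + rb = 0 then 0 else rg / (rg + rb) with hc
  refine ⟨fun k => pg0 + (pl k - pl 0) * c, fun k => pb0 + (pl k - pl 0) * (1 - c),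
    by simp, by simp, ?_, ?_, ?_⟩
  · intro k hk
    have hb := hload k hk
    have key : |pl (k+1) - pl k| * c ≤ rg := by
      by_cases hs : rg + rb = 0
      · simp [hc, hs, hrg]
      · have hpos : 0 < rg + rb := lt_of_le_of_ne (by linarith) (Ne.symm hs)
        have hcv : c = rg / (rg + rb) := by simp [hc, hs]
        rw [hcv]
        calc |pl (k+1) - pl k| * (rg / (rg + rb)) ≤ (rg + rb) * (rg / (rg + rb)) := by
              apply mul_le_mul_of_nonneg_right hb (by positivity)
          _ = rg := by field_simp
    calc |pg0 + (pl (k+1) - pl 0) * c - (pg0 + (pl k - pl 0) * c)|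
        = |(pl (k+1) - pl k) * c| := by ring_nf
      _ = |pl (k+1) - pl k| * c := by
          rw [abs_mul]; congr 1
          refine abs_of_nonneg ?_
          by_cases hs : rg + rb = 0
          · simp [hc, hs]
          · have hpos : 0 < rg + rb := lt_of_le_of_ne (by linarith) (Ne.symm hs)
            simp only [hc, hs, if_false]; positivity
      _ ≤ rg := key
  · intro k hk
    have hb := hload k hk
    have key : |pl (k+1) - pl k| * (1 - c) ≤ rb := by
      by_cases hs : rg + rb = 0
      · have : |pl (k+1) - pl k| ≤ 0 := by linarith
        have h0 : |pl (k+1) - pl k| = 0 := le_antisymm this (abs_nonneg _)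
        simp [hc, hs, h0, hrb]
      · have hpos : 0 < rg + rb := lt_of_le_of_ne (by linarith) (Ne.symm hs)
        have hcv : (1 : ℝ) - c = rb / (rg + rb) := by
          simp only [hc, hs, if_false]; field_simp; ring
        rw [hcv]
        calc |pl (k+1) - pl k| * (rb / (rg + rb)) ≤ (rg + rb) * (rb / (rg + rb)) := by
              apply mul_le_mul_of_nonneg_right hb (by positivity)
          _ = rb := by field_simp
    have h1c : (0:ℝ) ≤ 1 - c := by
      by_cases hs : rg + rb = 0
      · simp [hc, hs]
      · have hpos : 0 < rg + rb := lt_of_le_of_ne (by linarith) (Ne.symm hs)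
        have : c = rg / (rg + rb) := by simp [hc, hs]
        rw [this, sub_nonneg, div_le_one hpos]
        linarith
    calc |pb0 + (pl (k+1) - pl 0) * (1 - c) - (pb0 + (pl k - pl 0) * (1 - c))|
        = |(pl (k+1) - pl k) * (1 - c)| := by ring_nf
      _ = |pl (k+1) - pl k| * (1 - c) := by rw [abs_mul, abs_of_nonneg h1c]
      _ ≤ rb := key
  · intro k _
    show pg0 + (pl k - pl 0) * c + (pb0 + (pl k - pl 0) * (1 - c)) = pl k
    have : (pl k - pl 0) * c + (pl k - pl 0) * (1 - c) = pl k - pl 0 := by ring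
    linarith
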